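/- Let 1 ≤ m < n be integers with gcd(m, n) = 1 and let r := n mod m (so 0 ≤ r ≤ m − 1). Then all the denominators below are nonzero and ∑_{l=0}^{n−1} ∑_{k=1}^{2m−1} 2(ζ_{2m}^{2nk} − 1) / ((1 − ζ_{2m}^{−k} ζ_{2n}^{−l})(1 − ζ_{2m}^{−k} ζ_{2n}^{l})) = 4mn − 4n(r + 1). -/

import Mathlib

open Finset

/-- `ζ_N = exp(2πi/N)`. -/
noncomputable def zeta (N : ℕ) : ℂ := Complex.exp (2 * Real.pi * Complex.I / N)

lemma zeta_prim {N : ℕ} (h : N ≠ 0) : IsPrimitiveRoot (zeta N) N := by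
  simpa [zeta] using Complex.isPrimitiveRoot_exp N h

lemma zeta_ne_zero (N : ℕ) : zeta N ≠ 0 := Complex.exp_ne_zero _

lemma zeta_pow_mul {c N : ℕ} (hc : c ≠ 0) (hN : N ≠ 0) : zeta (c * N) ^ c = zeta N := by
  unfold zeta
  rw [← Complex.exp_nat_mul]
  congr 1
  have hc' : (c : ℂ) ≠ 0 := Nat.cast_ne_zero.mpr hc
  have hN' : (N : ℂ) ≠ 0 := Nat.cast_ne_zero.mpr hN
  push_cast
  field_simp

lemma zeta_two_mul_pow {N : ℕ} (hN : N ≠ 0) : zeta (2 * N) ^ N = -1 := by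
  unfold zeta
  rw [← Complex.exp_nat_mul]
  have hN' : (N : ℂ) ≠ 0 := Nat.cast_ne_zero.mpr hN
  have : (N : ℂ) * (2 * Real.pi * Complex.I / (2 * N : ℕ)) = Real.pi * Complex.I := by
    push_cast; field_simp
  rw [this, Complex.exp_pi_mul_I]

lemma sum_range_two_mul (n : ℕ) (f : ℕ → ℂ) :
    ∑ j ∈ range (2*n), f j = ∑ i ∈ range n, (f (2*i) + f (2*i+1)) := by
  induction n with
  | zero => simp
  | succ n ih =>
      have h : 2 * (n+1) = (2*n + 1) + 1 := by ring
      rw [h, Finset.sum_range_succ, Finset.sum_range_succ, ih, Finset.sum_range_succ]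
      ring

lemma one_sub_ne {b : ℂ} {t : ℂ} {N : ℕ} (hb : b ≠ 1) (ht : t ^ N = b) : 1 - t ≠ 0 := by
  intro h
  have : t = 1 := by linear_combination -h
  apply hb; rw [← ht, this, one_pow]

lemma inv_one_sub {b : ℂ} {t : ℂ} {N : ℕ} (hb : b ≠ 1) (ht : t ^ N = b) :
    (1 - t)⁻¹ = (∑ j ∈ range N, t ^ j) / (1 - b) := by
  have h1 : (1 - t) * ∑ j ∈ range N, t ^ j = 1 - b := by
    have := geom_sum_mul t N
    rw [ht] at this
    linear_combination -this
  have h2 : 1 - t ≠ 0 := one_sub_ne hb ht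
  have hb' : 1 - b ≠ 0 := by intro h; apply hb; linear_combination -h
  rw [eq_div_iff hb', ← h1, inv_mul_cancel_left₀ h2]

lemma partial_frac (a x : ℂ) (hx : x ≠ 0) (h1 : 1 - a*x ≠ 0) (h2 : 1 - a*x⁻¹ ≠ 0)
    (ha : 1 - a^2 ≠ 0) :
    ((1 - a*x⁻¹) * (1 - a*x))⁻¹ = ((1-a*x)⁻¹ + (1-a*x⁻¹)⁻¹ - 1)/(1 - a^2) := by
  have h3 : x - a ≠ 0 := by
    intro h
    apply h2
    have : a = x := by linear_combination -h
    rw [this, mul_inv_cancel₀ hx, sub_self]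
  have hrw : 1 - a*x⁻¹ = (x - a) * x⁻¹ := by field_simp
  rw [hrw]
  have h1' : 1 - x*a ≠ 0 := by rwa [mul_comm]
  field_simp
  ring

lemma g_odd {n j : ℕ} (hn : n ≠ 0) (hj : j < 2*n) (hodd : Odd j) :
    ∑ l ∈ range n, ((zeta (2*n) ^ j) ^ l + ((zeta (2*n) ^ j)⁻¹) ^ l) = 2 := by
  have hprim : IsPrimitiveRoot (zeta (2*n)) (2*n) := zeta_prim (by omega)
  have hx0 : zeta (2*n) ^ j ≠ 0 := pow_ne_zero _ (zeta_ne_zero _)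
  have hx1 : zeta (2*n) ^ j ≠ 1 := hprim.pow_ne_one_of_pos_of_lt hodd.pos.ne' hj
  have hxi1 : (zeta (2*n) ^ j)⁻¹ ≠ 1 := by rw [Ne, inv_eq_one]; exact hx1
  have hωn : zeta (2*n) ^ n = -1 := zeta_two_mul_pow hn
  have hxn : (zeta (2*n) ^ j) ^ n = -1 := by
    rw [← pow_mul, mul_comm j n, pow_mul, hωn, hodd.neg_one_pow]
  have hxin : ((zeta (2*n) ^ j)⁻¹) ^ n = -1 := by rw [inv_pow, hxn]; norm_num
  rw [Finset.sum_add_distrib, geom_sum_eq hx1, geom_sum_eq hxi1, hxn, hxin]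
  have h1 : zeta (2*n) ^ j - 1 ≠ 0 := sub_ne_zero.mpr hx1
  have h1' : (1:ℂ) - zeta (2*n) ^ j ≠ 0 := sub_ne_zero.mpr (Ne.symm hx1)
  have h2 : (zeta (2*n) ^ j)⁻¹ - 1 ≠ 0 := sub_ne_zero.mpr hxi1
  field_simp
  ring

lemma g_even {n j : ℕ} (hn : n ≠ 0) (hj0 : 0 < j) (hj : j < 2*n) (heven : Even j) :
    ∑ l ∈ range n, ((zeta (2*n) ^ j) ^ l + ((zeta (2*n) ^ j)⁻¹) ^ l) = 0 := by
  have hprim : IsPrimitiveRoot (zeta (2*n)) (2*n) := zeta_prim (by omega)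
  have hx1 : zeta (2*n) ^ j ≠ 1 := hprim.pow_ne_one_of_pos_of_lt hj0.ne' hj
  have hxi1 : (zeta (2*n) ^ j)⁻¹ ≠ 1 := by rw [Ne, inv_eq_one]; exact hx1
  have hωn : zeta (2*n) ^ n = -1 := zeta_two_mul_pow hn
  have hxn : (zeta (2*n) ^ j) ^ n = 1 := by
    rw [← pow_mul, mul_comm j n, pow_mul, hωn, heven.neg_one_pow]
  have hxin : ((zeta (2*n) ^ j)⁻¹) ^ n = 1 := by rw [inv_pow, hxn]; norm_num
  rw [Finset.sum_add_distrib, geom_sum_eq hx1, geom_sum_eq hxi1, hxn, hxin]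
  simp

lemma innerSum {n : ℕ} (hn : n ≠ 0) {a : ℂ} (ha2 : a^2 ≠ 1) (hb : a^(2*n) ≠ 1) :
    ∑ l ∈ range n, ((1 - a * (zeta (2*n))⁻¹ ^ l) * (1 - a * zeta (2*n) ^ l))⁻¹
      = (2*(n:ℂ)/(1-a^(2*n)) - n)/(1-a^2) + 2*a/(1-a^2)^2 := by
  set ω := zeta (2*n) with hωdef
  have hω0 : ω ≠ 0 := zeta_ne_zero _
  have hprim : IsPrimitiveRoot ω (2*n) := zeta_prim (by omega)
  have hω2n : ω ^ (2*n) = 1 := hprim.pow_eq_one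
  have ha2' : 1 - a^2 ≠ 0 := sub_ne_zero.mpr (Ne.symm ha2)
  have hb' : 1 - a^(2*n) ≠ 0 := sub_ne_zero.mpr (Ne.symm hb)
  have ha21 : a^2 - 1 ≠ 0 := sub_ne_zero.mpr ha2
  have key : ∀ l : ℕ, ((1 - a * (ω⁻¹) ^ l) * (1 - a * ω ^ l))⁻¹
      = ((∑ j ∈ range (2*n), ((a * ω ^ l)^j + (a * (ω ^ l)⁻¹)^j)) / (1 - a^(2*n)) - 1)/(1-a^2) := by
    intro l
    have hx : ω ^ l ≠ 0 := pow_ne_zero _ hω0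
    have hpowl : ((ω:ℂ) ^ l) ^ (2*n) = 1 := by rw [← pow_mul, mul_comm, pow_mul, hω2n, one_pow]
    have hpowli : (((ω:ℂ) ^ l)⁻¹) ^ (2*n) = 1 := by rw [inv_pow, hpowl, inv_one]
    have ht2 : (a * ω ^ l) ^ (2*n) = a^(2*n) := by rw [mul_pow, hpowl, mul_one]
    have ht1 : (a * (ω ^ l)⁻¹) ^ (2*n) = a^(2*n) := by rw [mul_pow, hpowli, mul_one]
    have h1 : 1 - a * ω ^ l ≠ 0 := one_sub_ne hb ht2
    have h2 : 1 - a * (ω ^ l)⁻¹ ≠ 0 := one_sub_ne hb ht1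
    rw [inv_pow ω l]
    rw [partial_frac a (ω^l) hx h1 h2 ha2']
    rw [inv_one_sub hb ht2, inv_one_sub hb ht1]
    rw [Finset.sum_add_distrib, ← add_div]
  rw [Finset.sum_congr rfl (fun l _ => key l)]
  have hswap : ∑ l ∈ range n, ∑ j ∈ range (2*n), ((a * ω ^ l)^j + (a * (ω ^ l)⁻¹)^j)
      = 2*(n:ℂ) + 2*a*(a^(2*n)-1)/(a^2-1) := by
    rw [Finset.sum_comm]
    have hterm : ∀ j ∈ range (2*n), ∑ l ∈ range n, ((a * ω ^ l)^j + (a * (ω ^ l)⁻¹)^j)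
        = a^j * ∑ l ∈ range n, ((ω^j)^l + ((ω^j)⁻¹)^l) := by
      intro j _
      rw [Finset.mul_sum]
      refine Finset.sum_congr rfl fun l _ => ?_
      rw [mul_pow, mul_pow, mul_add]
      congr 2
      · rw [← pow_mul, mul_comm, pow_mul]
      · rw [inv_pow, ← pow_mul, mul_comm, pow_mul, ← inv_pow]
    rw [Finset.sum_congr rfl hterm, sum_range_two_mul]
    rw [Finset.sum_add_distrib]
    have hfirst : ∑ i ∈ range n, a^(2*i) * ∑ l ∈ range n, ((ω^(2*i))^l + ((ω^(2*i))⁻¹)^l)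
        = 2*(n:ℂ) := by
      rw [Finset.sum_eq_single_of_mem 0 (Finset.mem_range.mpr (Nat.pos_of_ne_zero hn))]
      · simp [Finset.sum_add_distrib, Finset.sum_const, Finset.card_range]
        ring
      · intro i hi hine
        rw [g_even hn (by omega) (by rw [Finset.mem_range] at hi; omega) ⟨i, by ring⟩, mul_zero]
    have hsecond : ∑ i ∈ range n, a^(2*i+1) * ∑ l ∈ range n, ((ω^(2*i+1))^l + ((ω^(2*i+1))⁻¹)^l)
        = 2*a*(a^(2*n)-1)/(a^2-1) := by
      have : ∀ i ∈ range n, a^(2*i+1) * ∑ l ∈ range n, ((ω^(2*i+1))^l + ((ω^(2*i+1))⁻¹)^l)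
          = (a^2)^i * (a*2) := by
        intro i hi
        rw [g_odd hn (by rw [Finset.mem_range] at hi; omega) ⟨i, by ring⟩]
        rw [pow_succ, pow_mul]
        ring
      rw [Finset.sum_congr rfl this, ← Finset.sum_mul, geom_sum_eq ha2, ← pow_mul]
      field_simp
    rw [hfirst, hsecond]
  rw [← Finset.sum_div, Finset.sum_sub_distrib, ← Finset.sum_div, Finset.sum_const,
    Finset.card_range, nsmul_eq_mul, mul_one, hswap]
  field_simp
  ring

/-- Let `1 ≤ m < n` be integers with `gcd(m, n) = 1` and let
`r := n mod m` (so `0 ≤ r ≤ m - 1`).  Then all the denominators below are nonzero and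
`∑_{l=0}^{n-1} ∑_{k=1}^{2m-1} 2(ζ_{2m}^{2nk} - 1) / ((1 - ζ_{2m}^{-k} ζ_{2n}^{-l})(1 - ζ_{2m}^{-k} ζ_{2n}^{l})) = 4mn - 4n(r + 1)`. -/
theorem stmt_4 (m n : ℕ) (hm : 1 ≤ m) (hmn : m < n) (hgcd : Nat.gcd m n = 1) :
    (∀ l ∈ Finset.range n, ∀ k ∈ Finset.Icc 1 (2 * m - 1),
        (1 : ℂ) - (zeta (2 * m))⁻¹ ^ k * (zeta (2 * n))⁻¹ ^ l ≠ 0 ∧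
        (1 : ℂ) - (zeta (2 * m))⁻¹ ^ k * zeta (2 * n) ^ l ≠ 0) ∧
    ∑ l ∈ Finset.range n, ∑ k ∈ Finset.Icc 1 (2 * m - 1),
        2 * (zeta (2 * m) ^ (2 * n * k) - 1) /
          ((1 - (zeta (2 * m))⁻¹ ^ k * (zeta (2 * n))⁻¹ ^ l) *
            (1 - (zeta (2 * m))⁻¹ ^ k * zeta (2 * n) ^ l))
      = 4 * (m : ℂ) * n - 4 * (n : ℂ) * ((n % m : ℕ) + 1) := by
  have hm0 : m ≠ 0 := by omega
  have hn0 : n ≠ 0 := by omega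
  have hprimM : IsPrimitiveRoot (zeta (2*m)) (2*m) := zeta_prim (by omega)
  have hprimN : IsPrimitiveRoot (zeta (2*n)) (2*n) := zeta_prim (by omega)
  have hprimw : IsPrimitiveRoot (zeta m) m := zeta_prim hm0
  have hMne : zeta (2*m) ≠ 0 := zeta_ne_zero _
  have hwne : zeta m ≠ 0 := zeta_ne_zero _
  have hM2m : zeta (2*m) ^ (2*m) = 1 := hprimM.pow_eq_one
  have hN2n : zeta (2*n) ^ (2*n) = 1 := hprimN.pow_eq_one
  have hMm : zeta (2*m) ^ m = -1 := zeta_two_mul_pow hm0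
  have hNn : zeta (2*n) ^ n = -1 := zeta_two_mul_pow hn0
  have hsq : zeta (2*m) ^ 2 = zeta m := zeta_pow_mul (by norm_num) hm0
  have hwm : zeta m ^ m = 1 := hprimw.pow_eq_one
  have hco : Nat.Coprime m n := hgcd
  -- m does not divide k for k in the punctured interval
  have hnd : ∀ k : ℕ, 1 ≤ k → k < 2*m → k ≠ m → ¬ m ∣ k := by
    intro k h1 h2 h3 hdvd
    obtain ⟨t, rfl⟩ := hdvd
    rcases t with _ | _ | t
    · simp at h1
    · simp at h3
    · have e : m*(t+1+1) = m*t + 2*m := by ring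
      omega
  -- ((zeta(2m))⁻¹^k)^(2n) ≠ 1
  have hbne : ∀ k : ℕ, 1 ≤ k → k < 2*m → k ≠ m → ((zeta (2*m))⁻¹ ^ k) ^ (2*n) ≠ 1 := by
    intro k h1 h2 h3
    rw [inv_pow, inv_pow, ← pow_mul, Ne, inv_eq_one, hprimM.pow_eq_one_iff_dvd]
    intro hdvd
    apply hnd k h1 h2 h3
    obtain ⟨t, ht⟩ := hdvd
    have h5 : n*k = m*t := by
      have h6 : 2*(n*k) = 2*(m*t) := by
        calc 2*(n*k) = k*(2*n) := by ring
        _ = 2*m*t := ht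
        _ = 2*(m*t) := by ring
      exact Nat.eq_of_mul_eq_mul_left (by norm_num) h6
    have h7 : m ∣ n * k := ⟨t, h5⟩
    exact hco.dvd_of_dvd_mul_left h7
  have ha2ne : ∀ k : ℕ, 1 ≤ k → k < 2*m → k ≠ m → ((zeta (2*m))⁻¹ ^ k) ^ 2 ≠ 1 := by
    intro k h1 h2 h3
    rw [inv_pow, inv_pow, ← pow_mul, Ne, inv_eq_one, hprimM.pow_eq_one_iff_dvd]
    intro hdvd
    apply hnd k h1 h2 h3
    obtain ⟨t, ht⟩ := hdvd
    have h5 : k = m*t := by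
      have h6 : k*2 = (m*t)*2 := by rw [ht]; ring
      exact Nat.eq_of_mul_eq_mul_right (by norm_num) h6
    exact ⟨t, h5⟩
  -- nonvanishing of denominators
  have hden : ∀ l, l < n → ∀ k, 1 ≤ k → k < 2*m →
      ((1:ℂ) - (zeta (2*m))⁻¹ ^ k * (zeta (2*n))⁻¹ ^ l ≠ 0 ∧
       (1:ℂ) - (zeta (2*m))⁻¹ ^ k * zeta (2*n) ^ l ≠ 0) := by
    intro l hl k hk1 hk2
    have hωl2n : (zeta (2*n) ^ l) ^ (2*n) = 1 := by
      rw [← pow_mul, mul_comm l, pow_mul, hN2n, one_pow]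
    have hωil2n : ((zeta (2*n))⁻¹ ^ l) ^ (2*n) = 1 := by
      rw [inv_pow, inv_pow, hωl2n, inv_one]
    by_cases hkm : k = m
    · rw [hkm]
      have ham : (zeta (2*m))⁻¹ ^ m = -1 := by rw [inv_pow, hMm]; norm_num
      have hωlne : zeta (2*n) ^ l ≠ -1 := by
        intro h
        have : l = n := hprimN.pow_inj (by omega) (by omega) (by rw [h, hNn])
        omega
      constructor
      · rw [ham]
        intro h
        apply hωlne
        have h2 : (zeta (2*n))⁻¹ ^ l = -1 := by linear_combination h
        rw [inv_pow] at h2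
        rw [inv_eq_iff_eq_inv] at h2
        rw [h2]; norm_num
      · rw [ham]
        intro h
        apply hωlne
        linear_combination h
    · have hb := hbne k hk1 hk2 hkm
      constructor
      · refine one_sub_ne (N := 2*n) hb ?_
        rw [mul_pow, hωil2n, mul_one]
      · refine one_sub_ne (N := 2*n) hb ?_
        rw [mul_pow, hωl2n, mul_one]
  constructor
  · intro l hl k hk
    rw [Finset.mem_range] at hl
    rw [Finset.mem_Icc] at hk
    exact hden l hl k hk.1 (by omega)
  · -- main computation
    rw [Finset.sum_comm]
    have hIcc : Finset.Icc 1 (2*m-1) = Finset.Ico 1 (2*m) := by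
      ext x; simp only [Finset.mem_Icc, Finset.mem_Ico]; omega
    rw [hIcc]
    have hm_mem : m ∈ Finset.Ico 1 (2*m) := by
      simp only [Finset.mem_Ico]; omega
    rw [show Finset.Ico 1 (2*m) = insert m ((Finset.Ico 1 (2*m)).erase m) from
      (Finset.insert_erase hm_mem).symm]
    rw [Finset.sum_insert (Finset.notMem_erase _ _)]
    have hzero : ∑ l ∈ Finset.range n, 2 * (zeta (2 * m) ^ (2 * n * m) - 1) /
          ((1 - (zeta (2 * m))⁻¹ ^ m * (zeta (2 * n))⁻¹ ^ l) *
            (1 - (zeta (2 * m))⁻¹ ^ m * zeta (2 * n) ^ l)) = 0 := by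
      have hnum : zeta (2*m) ^ (2*n*m) = 1 := by
        rw [show 2*n*m = (2*m)*n by ring, pow_mul, hM2m, one_pow]
      simp [hnum]
    rw [hzero, zero_add]
    -- shift identities
    have hshift1 : ∀ b : ℕ, zeta m ^ (b+m) = zeta m ^ b := by
      intro b; rw [pow_add, hwm, mul_one]
    have hshift2 : ∀ b : ℕ, zeta m ^ (n*(b+m)) = zeta m ^ (n*b) := by
      intro b
      have hmn1 : zeta m ^ (m*n) = 1 := by rw [pow_mul, hwm, one_pow]
      rw [show n*(b+m) = n*b + m*n by ring, pow_add, hmn1, mul_one]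
    have hshift3 : ∀ b : ℕ, zeta (2*m) ^ (b+m) = -(zeta (2*m) ^ b) := by
      intro b; rw [pow_add, hMm, mul_neg, mul_one]
    -- per-k evaluation
    have hk_eq : ∀ k ∈ (Finset.Ico 1 (2*m)).erase m,
        (∑ l ∈ Finset.range n, 2 * (zeta (2 * m) ^ (2 * n * k) - 1) /
          ((1 - (zeta (2 * m))⁻¹ ^ k * (zeta (2 * n))⁻¹ ^ l) *
            (1 - (zeta (2 * m))⁻¹ ^ k * zeta (2 * n) ^ l)))
        = 2*(n:ℂ)*(zeta m ^ (n*k) + 1)/(1-(zeta m ^ k)⁻¹)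
          + 4*(zeta (2*m) ^ k)⁻¹*(zeta m ^ (n*k) - 1)/(1-(zeta m ^ k)⁻¹)^2 := by
      intro k hk
      rw [Finset.mem_erase, Finset.mem_Ico] at hk
      obtain ⟨hkm, hk1, hk2⟩ := hk
      have hb := hbne k hk1 hk2 hkm
      have ha2 := ha2ne k hk1 hk2 hkm
      have hstep : ∀ l ∈ Finset.range n, 2 * (zeta (2 * m) ^ (2 * n * k) - 1) /
          ((1 - (zeta (2 * m))⁻¹ ^ k * (zeta (2 * n))⁻¹ ^ l) *
            (1 - (zeta (2 * m))⁻¹ ^ k * zeta (2 * n) ^ l))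
          = 2 * (zeta (2 * m) ^ (2 * n * k) - 1) *
          ((1 - (zeta (2 * m))⁻¹ ^ k * (zeta (2 * n))⁻¹ ^ l) *
            (1 - (zeta (2 * m))⁻¹ ^ k * zeta (2 * n) ^ l))⁻¹ := fun l _ => div_eq_mul_inv _ _
      rw [Finset.sum_congr rfl hstep, ← Finset.mul_sum, innerSum hn0 ha2 hb]
      have hak : (zeta (2*m))⁻¹ ^ k = (zeta (2*m) ^ k)⁻¹ := inv_pow _ _
      have ha2eq : ((zeta (2*m))⁻¹ ^ k)^2 = (zeta m ^ k)⁻¹ := by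
        rw [hak, inv_pow, ← pow_mul, show k*2 = 2*k by ring, pow_mul, hsq]
      have hbeq : ((zeta (2*m))⁻¹ ^ k)^(2*n) = (zeta m ^ (n*k))⁻¹ := by
        rw [hak, inv_pow, ← pow_mul, show k*(2*n) = 2*(n*k) by ring, pow_mul, hsq]
      have hYw : zeta (2*m) ^ (2*n*k) = zeta m ^ (n*k) := by
        rw [show 2*n*k = 2*(n*k) by ring, pow_mul, hsq]
      have hY1 : 1 - (zeta m ^ (n*k))⁻¹ ≠ 0 := by
        have h := sub_ne_zero.mpr (Ne.symm hb); rw [hbeq] at h; exact h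
      have hX1 : 1 - (zeta m ^ k)⁻¹ ≠ 0 := by
        have h := sub_ne_zero.mpr (Ne.symm ha2); rw [ha2eq] at h; exact h
      have hY0 : zeta m ^ (n*k) ≠ 0 := pow_ne_zero _ hwne
      have hA : (zeta m ^ (n*k) - 1)*(2*(n:ℂ)/(1-(zeta m ^ (n*k))⁻¹) - n)
          = (n:ℂ)*(zeta m ^ (n*k) + 1) := by
        have hYs : zeta m ^ (n*k) - 1 ≠ 0 := by
          intro h
          apply hY1
          rw [show zeta m ^ (n*k) = 1 by linear_combination h, inv_one, sub_self]
        field_simp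
        ring
      rw [ha2eq, hbeq, hYw, hak]
      linear_combination (2 * (1 - (zeta m ^ k)⁻¹)⁻¹) * hA
    rw [Finset.sum_congr rfl hk_eq, Finset.sum_add_distrib]
    -- the antisymmetric part sums to zero
    have hflip : ∀ b : ℕ, 4*(zeta (2*m) ^ (b+m))⁻¹*(zeta m ^ (n*(b+m)) - 1)/(1-(zeta m ^ (b+m))⁻¹)^2
        = -(4*(zeta (2*m) ^ b)⁻¹*(zeta m ^ (n*b) - 1)/(1-(zeta m ^ b)⁻¹)^2) := by
      intro b
      rw [hshift1, hshift2, hshift3, inv_neg]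
      ring
    have hG2 : ∑ k ∈ (Finset.Ico 1 (2*m)).erase m,
        4*(zeta (2*m) ^ k)⁻¹*(zeta m ^ (n*k) - 1)/(1-(zeta m ^ k)⁻¹)^2 = 0 := by
      apply Finset.sum_involution (fun k _ => if k < m then k + m else k - m)
      · intro k hk
        rw [Finset.mem_erase, Finset.mem_Ico] at hk
        by_cases h : k < m
        · simp only [if_pos h]
          rw [hflip k]; ring
        · simp only [if_neg h]
          obtain ⟨b, rfl⟩ : ∃ b, k = b + m := ⟨k - m, by omega⟩
          rw [Nat.add_sub_cancel, hflip b]; ring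
      · intro k hk _
        rw [Finset.mem_erase, Finset.mem_Ico] at hk
        split_ifs <;> omega
      · intro k hk
        rw [Finset.mem_erase, Finset.mem_Ico] at hk
        rw [Finset.mem_erase, Finset.mem_Ico]
        split_ifs <;> omega
      · intro k hk
        rw [Finset.mem_erase, Finset.mem_Ico] at hk
        split_ifs <;> omega
    rw [hG2, add_zero]
    -- split and fold the remaining sum
    have hEsplit : (Finset.Ico 1 (2*m)).erase m = Finset.Ico 1 m ∪ Finset.Ico (m+1) (2*m) := by
      ext x
      simp only [Finset.mem_erase, Finset.mem_Ico, Finset.mem_union]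
      omega
    have hdisj : Disjoint (Finset.Ico 1 m) (Finset.Ico (m+1) (2*m)) := by
      rw [Finset.disjoint_left]
      intro x hx hx2
      rw [Finset.mem_Ico] at hx hx2
      omega
    rw [hEsplit, Finset.sum_union hdisj]
    have hsum2 : ∑ k ∈ Finset.Ico (m+1) (2*m),
        2*(n:ℂ)*(zeta m ^ (n*k) + 1)/(1-(zeta m ^ k)⁻¹)
        = ∑ k ∈ Finset.Ico 1 m, 2*(n:ℂ)*(zeta m ^ (n*k) + 1)/(1-(zeta m ^ k)⁻¹) := by
      rw [Finset.sum_Ico_eq_sum_range, Finset.sum_Ico_eq_sum_range]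
      rw [show 2*m - (m+1) = m - 1 by omega]
      refine Finset.sum_congr rfl fun i _ => ?_
      rw [show m+1+i = (1+i)+m by omega, hshift1, hshift2]
    rw [hsum2]
    -- the two elementary sums
    have hE1 : ∑ k ∈ Finset.Ico 1 m, (1 - (zeta m ^ k)⁻¹)⁻¹ = ((m:ℂ)-1)/2 := by
      have hne1 : ∀ k ∈ Finset.Ico 1 m, zeta m ^ k ≠ 1 := by
        intro k hk
        rw [Finset.mem_Ico] at hk
        exact hprimw.pow_ne_one_of_pos_of_lt (by omega) hk.2
      have hreindex : ∑ k ∈ Finset.Ico 1 m, (1 - (zeta m ^ k)⁻¹)⁻¹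
          = ∑ k ∈ Finset.Ico 1 m, (1 - zeta m ^ k)⁻¹ := by
        refine Finset.sum_nbij' (fun k => m - k) (fun k => m - k) ?_ ?_ ?_ ?_ ?_
        · intro a ha; simp only [Finset.mem_Ico] at ha ⊢; omega
        · intro a ha; simp only [Finset.mem_Ico] at ha ⊢; omega
        · intro a ha; simp only [Finset.mem_Ico] at ha; omega
        · intro a ha; simp only [Finset.mem_Ico] at ha; omega
        · intro a ha
          simp only [Finset.mem_Ico] at ha
          have hmul : zeta m ^ (m-a) * zeta m ^ a = 1 := by
            rw [← pow_add, show m-a+a = m by omega, hwm]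
          have hinv : zeta m ^ (m-a) = (zeta m ^ a)⁻¹ := eq_inv_of_mul_eq_one_left hmul
          rw [hinv]
      have hpair : ∀ k ∈ Finset.Ico 1 m,
          (1 - (zeta m ^ k)⁻¹)⁻¹ + (1 - zeta m ^ k)⁻¹ = 1 := by
        intro k hk
        have h0 : zeta m ^ k ≠ 0 := pow_ne_zero _ hwne
        have h1 : zeta m ^ k ≠ 1 := hne1 k hk
        have h2 : 1 - zeta m ^ k ≠ 0 := sub_ne_zero.mpr (Ne.symm h1)
        have hca : 1 - (zeta m ^ k)⁻¹ = -(1 - zeta m ^ k) * (zeta m ^ k)⁻¹ := by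
          linear_combination -mul_inv_cancel₀ h0
        rw [hca, mul_inv, inv_neg, inv_inv]
        linear_combination mul_inv_cancel₀ h2
      have hsum : (∑ k ∈ Finset.Ico 1 m, (1 - (zeta m ^ k)⁻¹)⁻¹)
          + (∑ k ∈ Finset.Ico 1 m, (1 - (zeta m ^ k)⁻¹)⁻¹) = (m:ℂ) - 1 := by
        nth_rewrite 2 [hreindex]
        rw [← Finset.sum_add_distrib, Finset.sum_congr rfl hpair, Finset.sum_const,
          Nat.card_Ico, nsmul_eq_mul, mul_one]
        have : ((m - 1 : ℕ) : ℂ) = (m:ℂ) - 1 := by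
          push_cast [Nat.cast_sub hm]; ring
        rw [this]
      linear_combination hsum / 2
    have hE3 : ∑ k ∈ Finset.Ico 1 m, (1 - zeta m ^ (n*k)) * (1 - (zeta m ^ k)⁻¹)⁻¹
        = ((n % m : ℕ) : ℂ) := by
      have hrm : n % m < m := Nat.mod_lt _ (by omega)
      have hpt : ∀ k ∈ Finset.Ico 1 m, (1 - zeta m ^ (n*k)) * (1 - (zeta m ^ k)⁻¹)⁻¹
          = -∑ t ∈ Finset.range (n % m), zeta m ^ (k*(t+1)) := by
        intro k hk
        rw [Finset.mem_Ico] at hk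
        have hd1 : zeta m ^ k ≠ 1 := hprimw.pow_ne_one_of_pos_of_lt (by omega) hk.2
        have hd0 : zeta m ^ k ≠ 0 := pow_ne_zero _ hwne
        have hdm : (zeta m ^ k)^m = 1 := by
          rw [← pow_mul, show k*m = m*k by ring, pow_mul, hwm, one_pow]
        have hdn : zeta m ^ (n*k) = (zeta m ^ k) ^ (n % m) := by
          rw [show n*k = k*n by ring, pow_mul]
          conv_lhs => rw [show n = m*(n/m) + n % m from (Nat.div_add_mod n m).symm]
          rw [pow_add, pow_mul, hdm, one_pow, one_mul]
        have hgeom : (1 - zeta m ^ k) * ∑ t ∈ Finset.range (n % m), (zeta m ^ k)^t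
            = 1 - (zeta m ^ k)^(n % m) := by
          have := geom_sum_mul (zeta m ^ k) (n % m)
          linear_combination -this
        have hkey : (1 - zeta m ^ k)*(1 - (zeta m ^ k)⁻¹)⁻¹ = -(zeta m ^ k) := by
          have h2' : 1 - zeta m ^ k ≠ 0 := sub_ne_zero.mpr (Ne.symm hd1)
          have hca : 1 - (zeta m ^ k)⁻¹ = -(1 - zeta m ^ k) * (zeta m ^ k)⁻¹ := by
            linear_combination -mul_inv_cancel₀ hd0
          rw [hca, mul_inv, inv_neg, inv_inv]
          linear_combination (-(zeta m ^ k)) * mul_inv_cancel₀ h2'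
        have hsumeq : ∑ t ∈ Finset.range (n % m), zeta m ^ (k*(t+1))
            = (∑ t ∈ Finset.range (n % m), (zeta m ^ k)^t) * (zeta m ^ k) := by
          rw [Finset.sum_mul]
          refine Finset.sum_congr rfl fun t _ => ?_
          rw [pow_mul, pow_succ]
        calc (1 - zeta m ^ (n*k)) * (1 - (zeta m ^ k)⁻¹)⁻¹
            = ((1 - zeta m ^ k) * ∑ t ∈ Finset.range (n % m), (zeta m ^ k)^t)
              * (1 - (zeta m ^ k)⁻¹)⁻¹ := by rw [hdn, hgeom]
          _ = ((1 - zeta m ^ k) * (1 - (zeta m ^ k)⁻¹)⁻¹)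
              * ∑ t ∈ Finset.range (n % m), (zeta m ^ k)^t := by ring
          _ = -(zeta m ^ k) * ∑ t ∈ Finset.range (n % m), (zeta m ^ k)^t := by rw [hkey]
          _ = -∑ t ∈ Finset.range (n % m), zeta m ^ (k*(t+1)) := by rw [hsumeq]; ring
      rw [Finset.sum_congr rfl hpt, Finset.sum_neg_distrib, Finset.sum_comm]
      have hin : ∀ t ∈ Finset.range (n % m),
          ∑ k ∈ Finset.Ico 1 m, zeta m ^ (k*(t+1)) = -1 := by
        intro t ht
        rw [Finset.mem_range] at ht
        have h1 : t + 1 < m := by omega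
        have hx1 : zeta m ^ (t+1) ≠ 1 := hprimw.pow_ne_one_of_pos_of_lt (by omega) h1
        have hfull : ∑ k ∈ Finset.range m, zeta m ^ (k*(t+1)) = 0 := by
          have hc : ∀ k ∈ Finset.range m, zeta m ^ (k*(t+1)) = (zeta m ^ (t+1))^k := by
            intro k _; rw [← pow_mul, mul_comm]
          rw [Finset.sum_congr rfl hc, geom_sum_eq hx1]
          have hp : (zeta m ^ (t+1))^m = 1 := by
            rw [← pow_mul, show (t+1)*m = m*(t+1) by ring, pow_mul, hwm, one_pow]
          rw [hp, sub_self, zero_div]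
        rw [Finset.range_eq_Ico, Finset.sum_eq_sum_Ico_succ_bot (by omega : 0 < m)] at hfull
        have h0 : zeta m ^ (0*(t+1)) = 1 := by norm_num
        rw [h0] at hfull
        linear_combination hfull
      rw [Finset.sum_congr rfl hin, Finset.sum_const, Finset.card_range, nsmul_eq_mul]
      ring
    have hsum1 : ∑ k ∈ Finset.Ico 1 m, 2*(n:ℂ)*(zeta m ^ (n*k) + 1)/(1-(zeta m ^ k)⁻¹)
        = 2*(n:ℂ)*(2*(((m:ℂ)-1)/2) - ((n % m : ℕ) : ℂ)) := by
      have hpt : ∀ k ∈ Finset.Ico 1 m, 2*(n:ℂ)*(zeta m ^ (n*k) + 1)/(1-(zeta m ^ k)⁻¹)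
          = 2*(n:ℂ)*(2*(1 - (zeta m ^ k)⁻¹)⁻¹
              - (1 - zeta m ^ (n*k)) * (1 - (zeta m ^ k)⁻¹)⁻¹) := by
        intro k _
        rw [div_eq_mul_inv]
        ring
      rw [Finset.sum_congr rfl hpt, ← Finset.mul_sum, Finset.sum_sub_distrib,
        ← Finset.mul_sum, hE1, hE3]
    rw [hsum1]
    ring
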